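/- If either X or Y is binary-valued (all probabilities of X-values and Y-values strictly positive), then ρ_m(X;Y)² = -1 + Σ_{a,b} p_{X,Y}(a,b)² / (p_X(a) p_Y(b)). -/

import Mathlib

open Finset Real

noncomputable def fexp {Ω : Type*} [Fintype Ω] (w : Ω → ℝ) (f : Ω → ℝ) : ℝ :=
  ∑ ω, w ω * f ω

def IsProbWeight {Ω : Type*} [Fintype Ω] (w : Ω → ℝ) : Prop :=
  (∀ ω, 0 ≤ w ω) ∧ ∑ ω, w ω = 1

noncomputable def maxCorr {Ω A B : Type*} [Fintype Ω] (w : Ω → ℝ)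
    (X : Ω → A) (Y : Ω → B) : ℝ :=
  sSup { r : ℝ | ∃ f : A → ℝ, ∃ g : B → ℝ,
    fexp w (fun ω => f (X ω)) = 0 ∧ fexp w (fun ω => g (Y ω)) = 0 ∧
    fexp w (fun ω => (f (X ω))^2) ≤ 1 ∧ fexp w (fun ω => (g (Y ω))^2) ≤ 1 ∧
    r = fexp w (fun ω => f (X ω) * g (Y ω)) }

noncomputable def pX {Ω A : Type*} [Fintype Ω] [DecidableEq A] (w : Ω → ℝ) (X : Ω → A) (a : A) : ℝ :=
  ∑ ω, if X ω = a then w ω else 0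

noncomputable def pJ {Ω A B : Type*} [Fintype Ω] [DecidableEq A] [DecidableEq B]
    (w : Ω → ℝ) (X : Ω → A) (Y : Ω → B) (a : A) (b : B) : ℝ :=
  ∑ ω, if X ω = a ∧ Y ω = b then w ω else 0

section Aux
set_option linter.unusedSectionVars false
variable {Ω A B : Type*} [Fintype Ω] [Fintype A] [Fintype B] [DecidableEq A] [DecidableEq B]

lemma fexp_comp (w : Ω → ℝ) (X : Ω → A) (F : A → ℝ) :
    fexp w (fun ω => F (X ω)) = ∑ a, pX w X a * F a := by
  unfold fexp pX
  simp_rw [Finset.sum_mul, ite_mul, zero_mul]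
  rw [Finset.sum_comm]
  refine Finset.sum_congr rfl fun ω _ => ?_
  simp [Finset.sum_ite_eq]

lemma fexp_comp2 (w : Ω → ℝ) (X : Ω → A) (Y : Ω → B) (F : A → B → ℝ) :
    fexp w (fun ω => F (X ω) (Y ω)) = ∑ a, ∑ b, pJ w X Y a b * F a b := by
  unfold fexp pJ
  simp_rw [Finset.sum_mul, ite_mul, zero_mul]
  have h : ∀ ω, w ω * F (X ω) (Y ω)
      = ∑ a, ∑ b, (if X ω = a ∧ Y ω = b then w ω * F a b else 0) := fun ω => by
    simp [ite_and, Finset.sum_ite_eq]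
  simp_rw [h]
  rw [Finset.sum_comm]
  exact Finset.sum_congr rfl fun a _ => Finset.sum_comm

lemma pJ_sum_right (w : Ω → ℝ) (X : Ω → A) (Y : Ω → B) (a : A) :
    ∑ b, pJ w X Y a b = pX w X a := by
  unfold pJ pX
  rw [Finset.sum_comm]
  refine Finset.sum_congr rfl fun ω _ => ?_
  simp [ite_and, Finset.sum_ite_eq]

lemma pJ_sum_left (w : Ω → ℝ) (X : Ω → A) (Y : Ω → B) (b : B) :
    ∑ a, pJ w X Y a b = pX w Y b := by
  unfold pJ pX
  rw [Finset.sum_comm]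
  refine Finset.sum_congr rfl fun ω _ => ?_
  simp [ite_and, Finset.sum_ite_eq]

lemma pX_sum (w : Ω → ℝ) (X : Ω → A) (hw : ∑ ω, w ω = 1) : ∑ a, pX w X a = 1 := by
  unfold pX
  rw [Finset.sum_comm]
  simp [Finset.sum_ite_eq, hw]

end Aux

lemma ident1 (p0 p1 q j0 j1 : ℝ) (hp0 : p0 ≠ 0) (hp1 : p1 ≠ 0) (hq : q ≠ 0)
    (hps : p0 + p1 = 1) (hjs : j0 + j1 = q) :
    j1^2/(p1*q) + j0^2/(p0*q) - q = (j1 - p1*q)^2/(p0*p1*q) := by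
  have h0 : j0 = q - j1 := by linarith
  have h1 : p0 = 1 - p1 := by linarith
  subst h0 h1
  field_simp
  ring

lemma ident2 (s0 s1 sS q j1 : ℝ) (hs0 : s0 ≠ 0) (hs1 : s1 ≠ 0) (hsS : sS ≠ 0) (hq : q ≠ 0)
    (hs01 : s0^2 + s1^2 = 1) :
    j1 * ((s0/s1) * ((j1 - s1^2*q)/(q*(s0*s1*sS))))
      + (q - j1) * ((-(s1/s0)) * ((j1 - s1^2*q)/(q*(s0*s1*sS))))
    = ((j1 - s1^2*q)^2/q) * (1/(s0^2*s1^2*sS)) := by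
  field_simp
  linear_combination (j1^2 - j1*s1^2*q) * hs01

theorem maxCorr_sq_binary {Ω B : Type*} [Fintype Ω] [Fintype B] [DecidableEq B]
    (w : Ω → ℝ) (hw : IsProbWeight w) (X : Ω → Bool) (Y : Ω → B)
    (hX : ∀ a : Bool, 0 < ∑ ω, if X ω = a then w ω else 0)
    (hY : ∀ b : B, 0 < ∑ ω, if Y ω = b then w ω else 0) :
    (maxCorr w X Y)^2 = -1 + ∑ a : Bool, ∑ b : B,
      (∑ ω, if X ω = a ∧ Y ω = b then w ω else 0)^2 /
      ((∑ ω, if X ω = a then w ω else 0) * (∑ ω, if Y ω = b then w ω else 0)) := by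
  obtain ⟨hw0, hw1⟩ := hw
  show (maxCorr w X Y)^2 = -1 + ∑ a : Bool, ∑ b : B,
      (pJ w X Y a b)^2 / (pX w X a * pX w Y b)
  set p0 := pX w X false with hp0def
  set p1 := pX w X true with hp1def
  have hp0 : 0 < p0 := hX false
  have hp1 : 0 < p1 := hX true
  have hqb : ∀ b, 0 < pX w Y b := hY
  have hpsum : p0 + p1 = 1 := by
    have h := pX_sum w X hw1
    rw [Fintype.sum_bool] at h
    linarith
  have hqsum : ∑ b, pX w Y b = 1 := pX_sum w Y hw1
  have hjb : ∀ b, pJ w X Y false b + pJ w X Y true b = pX w Y b := fun b => by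
    have h := pJ_sum_left w X Y b
    rw [Fintype.sum_bool] at h
    linarith
  have hj1sum : ∑ b, pJ w X Y true b = p1 := pJ_sum_right w X Y true
  set D := ∑ b, (pJ w X Y true b - p1 * pX w Y b)^2 / pX w Y b with hDdef
  have hD0 : 0 ≤ D :=
    Finset.sum_nonneg fun b _ => div_nonneg (sq_nonneg _) (hqb b).le
  set S := D / (p0 * p1) with hSdef
  have hS0 : 0 ≤ S := div_nonneg hD0 (by positivity)
  -- RHS equals S
  have hRHS : (-1 + ∑ a : Bool, ∑ b : B, (pJ w X Y a b)^2 / (pX w X a * pX w Y b)) = S := by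
    rw [Fintype.sum_bool, ← Finset.sum_add_distrib]
    have step1 : (-1 : ℝ) + ∑ b, ((pJ w X Y true b)^2/(p1 * pX w Y b)
        + (pJ w X Y false b)^2/(p0 * pX w Y b))
        = ∑ b, ((pJ w X Y true b)^2/(p1 * pX w Y b)
        + (pJ w X Y false b)^2/(p0 * pX w Y b) - pX w Y b) := by
      rw [Finset.sum_sub_distrib, hqsum]; ring
    rw [step1]
    have step2 : ∀ b ∈ (univ : Finset B), (pJ w X Y true b)^2/(p1 * pX w Y b)
        + (pJ w X Y false b)^2/(p0 * pX w Y b) - pX w Y b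
        = ((pJ w X Y true b - p1 * pX w Y b)^2 / pX w Y b) / (p0 * p1) := by
      intro b _
      rw [ident1 p0 p1 (pX w Y b) (pJ w X Y false b) (pJ w X Y true b)
        hp0.ne' hp1.ne' (hqb b).ne' hpsum (hjb b)]
      rw [div_div]
      ring_nf
    rw [Finset.sum_congr rfl step2, ← Finset.sum_div]
  rw [hRHS]
  suffices hmc : maxCorr w X Y = Real.sqrt S by rw [hmc, Real.sq_sqrt hS0]
  -- upper bound for every member of the set
  have hub : ∀ r ∈ { r : ℝ | ∃ f : Bool → ℝ, ∃ g : B → ℝ,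
      fexp w (fun ω => f (X ω)) = 0 ∧ fexp w (fun ω => g (Y ω)) = 0 ∧
      fexp w (fun ω => (f (X ω))^2) ≤ 1 ∧ fexp w (fun ω => (g (Y ω))^2) ≤ 1 ∧
      r = fexp w (fun ω => f (X ω) * g (Y ω)) }, r ≤ Real.sqrt S := by
    rintro r ⟨f, g, hf0, hg0, hf2, hg2, hr⟩
    have e1 : fexp w (fun ω => f (X ω)) = ∑ a, pX w X a * f a := fexp_comp w X f
    have e2 : fexp w (fun ω => (f (X ω))^2) = ∑ a, pX w X a * (f a)^2 :=
      fexp_comp w X (fun a => (f a)^2)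
    have e4 : fexp w (fun ω => (g (Y ω))^2) = ∑ b, pX w Y b * (g b)^2 :=
      fexp_comp w Y (fun b => (g b)^2)
    have e5 : fexp w (fun ω => f (X ω) * g (Y ω))
        = ∑ a, ∑ b, pJ w X Y a b * (f a * g b) := fexp_comp2 w X Y (fun a b => f a * g b)
    rw [e1, Fintype.sum_bool] at hf0
    rw [e2, Fintype.sum_bool] at hf2
    rw [← hp0def, ← hp1def] at hf0 hf2
    rw [e4] at hg2
    rw [e5, Fintype.sum_bool, ← Finset.sum_add_distrib] at hr
    have hterm : ∀ b ∈ (univ : Finset B),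
        pJ w X Y true b * (f true * g b) + pJ w X Y false b * (f false * g b)
        = (f true / p0) * ((pJ w X Y true b - p1 * pX w Y b) * g b) := by
      intro b _
      have hj0 : pJ w X Y false b = pX w Y b - pJ w X Y true b := by linarith [hjb b]
      have hf00 : f false = -(p1 * f true) / p0 := by
        field_simp
        linarith [hf0]
      rw [hj0, hf00]
      field_simp
      linear_combination (f true * g b * pJ w X Y true b) * hpsum
    rw [Finset.sum_congr rfl hterm, ← Finset.mul_sum] at hr
    set K := ∑ b, (pJ w X Y true b - p1 * pX w Y b) * g b with hKdef
    -- Cauchy-Schwarz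
    have hK2 : K^2 ≤ D := by
      have hcs := Finset.sum_mul_sq_le_sq_mul_sq univ
        (fun b => (pJ w X Y true b - p1 * pX w Y b) / Real.sqrt (pX w Y b))
        (fun b => Real.sqrt (pX w Y b) * g b)
      have l1 : ∀ b ∈ (univ : Finset B),
          (pJ w X Y true b - p1 * pX w Y b) / Real.sqrt (pX w Y b)
            * (Real.sqrt (pX w Y b) * g b)
          = (pJ w X Y true b - p1 * pX w Y b) * g b := by
        intro b _
        have hs : Real.sqrt (pX w Y b) ≠ 0 := (Real.sqrt_pos.mpr (hqb b)).ne'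
        field_simp
      have l2 : ∀ b ∈ (univ : Finset B),
          ((pJ w X Y true b - p1 * pX w Y b) / Real.sqrt (pX w Y b))^2
          = (pJ w X Y true b - p1 * pX w Y b)^2 / pX w Y b := by
        intro b _
        rw [div_pow, Real.sq_sqrt (hqb b).le]
      have l3 : ∀ b ∈ (univ : Finset B),
          (Real.sqrt (pX w Y b) * g b)^2 = pX w Y b * (g b)^2 := by
        intro b _
        rw [mul_pow, Real.sq_sqrt (hqb b).le]
      rw [Finset.sum_congr rfl l1, Finset.sum_congr rfl l2, Finset.sum_congr rfl l3] at hcs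
      calc K^2 ≤ D * ∑ b, pX w Y b * (g b)^2 := hcs
        _ ≤ D * 1 := by
            apply mul_le_mul_of_nonneg_left hg2 hD0
        _ = D := mul_one D
    have hf1sq : p1 * (f true)^2 ≤ p0 := by
      have key1 : p1^2 * f true^2 + p0*p1*(f false * f true) = 0 := by
        linear_combination (p1 * f true) * hf0
      have key2 : p0*p1*(f false * f true) + p0^2 * f false^2 = 0 := by
        linear_combination (p0 * f false) * hf0
      have key3 : p0 * (p1 * f true^2 + p0 * f false^2) ≤ p0 * 1 :=
        mul_le_mul_of_nonneg_left hf2 hp0.le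
      have key3' : p0*p1*f true^2 + p0^2*f false^2 ≤ p0 := by nlinarith [key3]
      have key4 : p1 * f true^2 = p0*p1*f true^2 + p1^2*f true^2 := by
        linear_combination (-(p1 * f true^2)) * hpsum
      linarith
    have hr2 : r^2 ≤ S := by
      rw [hr]
      have hrw : (f true / p0 * K)^2 = (f true)^2 * K^2 / p0^2 := by ring
      rw [hrw, hSdef]
      have h1 : (f true)^2 * K^2 ≤ (p0/p1) * D := by
        calc (f true)^2 * K^2 ≤ (f true)^2 * D :=
              mul_le_mul_of_nonneg_left hK2 (sq_nonneg _)
          _ ≤ (p0/p1) * D := by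
              apply mul_le_mul_of_nonneg_right _ hD0
              rw [le_div_iff₀ hp1]
              linarith [hf1sq]
      calc (f true)^2 * K^2 / p0^2 ≤ ((p0/p1) * D) / p0^2 := by gcongr
        _ = D / (p0 * p1) := by field_simp
    calc r ≤ |r| := le_abs_self r
      _ = Real.sqrt (r^2) := (Real.sqrt_sq_eq_abs r).symm
      _ ≤ Real.sqrt S := Real.sqrt_le_sqrt hr2
  -- maxCorr = sqrt S
  have hmem : Real.sqrt S ∈ { r : ℝ | ∃ f : Bool → ℝ, ∃ g : B → ℝ,
      fexp w (fun ω => f (X ω)) = 0 ∧ fexp w (fun ω => g (Y ω)) = 0 ∧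
      fexp w (fun ω => (f (X ω))^2) ≤ 1 ∧ fexp w (fun ω => (g (Y ω))^2) ≤ 1 ∧
      r = fexp w (fun ω => f (X ω) * g (Y ω)) } := by
    by_cases hS : S = 0
    · refine ⟨fun _ => 0, fun _ => 0, ?_, ?_, ?_, ?_, ?_⟩ <;>
        simp [fexp, hS]
    · have hSpos : 0 < S := lt_of_le_of_ne hS0 (Ne.symm hS)
      set s0 := Real.sqrt p0 with hs0def
      set s1 := Real.sqrt p1 with hs1def
      set sS := Real.sqrt S with hsSdef
      have hs0 : 0 < s0 := Real.sqrt_pos.mpr hp0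
      have hs1 : 0 < s1 := Real.sqrt_pos.mpr hp1
      have hsS : 0 < sS := Real.sqrt_pos.mpr hSpos
      have hs0q : s0^2 = p0 := Real.sq_sqrt hp0.le
      have hs1q : s1^2 = p1 := Real.sq_sqrt hp1.le
      have hsSq : sS^2 = S := Real.sq_sqrt hS0
      have hs01 : s0^2 + s1^2 = 1 := by rw [hs0q, hs1q]; exact hpsum
      refine ⟨fun a : Bool => cond a (s0/s1) (-(s1/s0)),
        fun b => (pJ w X Y true b - p1 * pX w Y b) / (pX w Y b * (s0*s1*sS)),
        ?_, ?_, ?_, ?_, ?_⟩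
      · have e : fexp w (fun ω => cond (X ω) (s0/s1) (-(s1/s0)))
            = ∑ a, pX w X a * (cond a (s0/s1) (-(s1/s0))) :=
          fexp_comp w X (fun a => cond a (s0/s1) (-(s1/s0)))
        rw [e, Fintype.sum_bool]
        show p1 * (s0/s1) + p0 * (-(s1/s0)) = 0
        rw [← hs0q, ← hs1q]
        field_simp
        ring
      · have e : fexp w (fun ω => (pJ w X Y true (Y ω) - p1 * pX w Y (Y ω)) /
            (pX w Y (Y ω) * (s0*s1*sS)))
            = ∑ b, pX w Y b * ((pJ w X Y true b - p1 * pX w Y b) / (pX w Y b * (s0*s1*sS))) :=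
          fexp_comp w Y (fun b => (pJ w X Y true b - p1 * pX w Y b) / (pX w Y b * (s0*s1*sS)))
        rw [e]
        have l : ∀ b ∈ (univ : Finset B),
            pX w Y b * ((pJ w X Y true b - p1 * pX w Y b) / (pX w Y b * (s0*s1*sS)))
            = (pJ w X Y true b - p1 * pX w Y b) * (1/(s0*s1*sS)) := by
          intro b _
          have hq : pX w Y b ≠ 0 := (hqb b).ne'
          field_simp
        rw [Finset.sum_congr rfl l, ← Finset.sum_mul, Finset.sum_sub_distrib,
          hj1sum, ← Finset.mul_sum, hqsum]
        ring
      · have e : fexp w (fun ω => (cond (X ω) (s0/s1) (-(s1/s0)))^2)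
            = ∑ a, pX w X a * (cond a (s0/s1) (-(s1/s0)))^2 :=
          fexp_comp w X (fun a => (cond a (s0/s1) (-(s1/s0)))^2)
        rw [e, Fintype.sum_bool]
        show p1 * (s0/s1)^2 + p0 * (-(s1/s0))^2 ≤ 1
        rw [← hs0q, ← hs1q]
        have heq : s1^2 * (s0/s1)^2 + s0^2 * (-(s1/s0))^2 = s0^2 + s1^2 := by
          field_simp
        rw [heq, hs01]
      · have e : fexp w (fun ω => ((pJ w X Y true (Y ω) - p1 * pX w Y (Y ω)) /
            (pX w Y (Y ω) * (s0*s1*sS)))^2)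
            = ∑ b, pX w Y b * ((pJ w X Y true b - p1 * pX w Y b) / (pX w Y b * (s0*s1*sS)))^2 :=
          fexp_comp w Y (fun b => ((pJ w X Y true b - p1 * pX w Y b) / (pX w Y b * (s0*s1*sS)))^2)
        rw [e]
        have l : ∀ b ∈ (univ : Finset B),
            pX w Y b * ((pJ w X Y true b - p1 * pX w Y b) / (pX w Y b * (s0*s1*sS)))^2
            = ((pJ w X Y true b - p1 * pX w Y b)^2 / pX w Y b) * (1/(p0*p1*S)) := by
          intro b _
          have hq : pX w Y b ≠ 0 := (hqb b).ne'
          rw [← hs0q, ← hs1q, ← hsSq]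
          field_simp
        rw [Finset.sum_congr rfl l, ← Finset.sum_mul, ← hDdef]
        have hDS : D = S * (p0*p1) := by
          rw [hSdef]
          field_simp
        rw [hDS]
        have : S * (p0*p1) * (1/(p0*p1*S)) = 1 := by
          field_simp
        rw [this]
      · have e : fexp w (fun ω => cond (X ω) (s0/s1) (-(s1/s0)) *
            ((pJ w X Y true (Y ω) - p1 * pX w Y (Y ω)) / (pX w Y (Y ω) * (s0*s1*sS))))
            = ∑ a, ∑ b, pJ w X Y a b * (cond a (s0/s1) (-(s1/s0)) *
              ((pJ w X Y true b - p1 * pX w Y b) / (pX w Y b * (s0*s1*sS)))) :=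
          fexp_comp2 w X Y (fun a b => cond a (s0/s1) (-(s1/s0)) *
            ((pJ w X Y true b - p1 * pX w Y b) / (pX w Y b * (s0*s1*sS))))
        rw [e, Fintype.sum_bool, ← Finset.sum_add_distrib]
        have l : ∀ b ∈ (univ : Finset B),
            pJ w X Y true b * (cond true (s0/s1) (-(s1/s0)) *
              ((pJ w X Y true b - p1 * pX w Y b) / (pX w Y b * (s0*s1*sS))))
            + pJ w X Y false b * (cond false (s0/s1) (-(s1/s0)) *
              ((pJ w X Y true b - p1 * pX w Y b) / (pX w Y b * (s0*s1*sS))))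
            = ((pJ w X Y true b - p1 * pX w Y b)^2 / pX w Y b) * (1/(p0*p1*sS)) := by
          intro b _
          have hq : pX w Y b ≠ 0 := (hqb b).ne'
          have hj0 : pJ w X Y false b = pX w Y b - pJ w X Y true b := by linarith [hjb b]
          show pJ w X Y true b * ((s0/s1) *
              ((pJ w X Y true b - p1 * pX w Y b) / (pX w Y b * (s0*s1*sS))))
            + pJ w X Y false b * ((-(s1/s0)) *
              ((pJ w X Y true b - p1 * pX w Y b) / (pX w Y b * (s0*s1*sS))))
            = ((pJ w X Y true b - p1 * pX w Y b)^2 / pX w Y b) * (1/(p0*p1*sS))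
          rw [hj0, ← hs0q, ← hs1q]
          exact ident2 s0 s1 sS (pX w Y b) (pJ w X Y true b)
            hs0.ne' hs1.ne' hsS.ne' hq hs01
        rw [Finset.sum_congr rfl l, ← Finset.sum_mul, ← hDdef]
        have hDS : D = S * (p0*p1) := by
          rw [hSdef]
          field_simp
        rw [hDS]
        rw [show S * (p0*p1) * (1/(p0*p1*sS)) = S / sS by field_simp]
        rw [← hsSq]
        rw [sq]
        rw [mul_div_assoc, div_self hsS.ne', mul_one]
  show sSup _ = Real.sqrt S
  apply le_antisymm
  · exact Real.sSup_le hub (Real.sqrt_nonneg S)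
  · exact le_csSup ⟨Real.sqrt S, fun x hx => hub x hx⟩ hmem
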